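/- Chomsky normal form transformation step (chain elimination): if p = (A, R) is a production whose right-hand side contains exactly one hyperedge e' with lab(e') = B ∈ N, then replacing p by the set of productions { (A, R[e'/X]) : (B, X) ∈ P } yields a grammar generating the same language, provided A ≠ B or the construction is iterated to a fixed point on productions with a single non-terminal hyperedge. -/

import Mathlib

/-- A hypergraph over a label set `C`: finite sets of vertices and hyperedges,
an attachment list and a label for each hyperedge, and a duplicate-free list of
external nodes. -/
structure HRGraph (C : Type) : Type 1 where
  V : Type
  E : Type
  finV : Finite V
  finE : Finite E
  att : E → List V
  lab : E → C
  ext : List V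
  ext_nodup : ext.Nodup

namespace HRGraph

variable {C : Type}

/-- The size `|H| = |V_H| + |E_H|` of a hypergraph. -/
noncomputable def size (H : HRGraph C) : ℕ := Nat.card H.V + Nat.card H.E

/-- Replacement `H[e/R]`: remove the hyperedge `e`, disjointly add the vertices and
hyperedges of `R`, and fuse the `i`-th external node of `R` with the `i`-th
attachment node of `e`. -/
noncomputable def replace (H : HRGraph C) (e : H.E) (R : HRGraph C)
    (hlen : R.ext.length = (H.att e).length) : HRGraph C := by
  classical
  exact
    { V := H.V ⊕ {v : R.V // v ∉ R.ext}
      E := {e' : H.E // e' ≠ e} ⊕ R.E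
      finV := by haveI := H.finV; haveI := R.finV; infer_instance
      finE := by haveI := H.finE; haveI := R.finE; infer_instance
      att := fun x =>
        match x with
        | Sum.inl e' => (H.att e'.1).map Sum.inl
        | Sum.inr f => (R.att f).map (fun v =>
            if hv : v ∈ R.ext then
              Sum.inl ((H.att e).get ⟨R.ext.idxOf v, hlen ▸ List.idxOf_lt_length_iff.mpr hv⟩)
            else Sum.inr ⟨v, hv⟩)
      lab := fun x => match x with | Sum.inl e' => H.lab e'.1 | Sum.inr f => R.lab f
      ext := H.ext.map Sum.inl
      ext_nodup := List.Nodup.map Sum.inl_injective H.ext_nodup }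

/-- Isomorphism of hypergraphs. -/
structure Iso (H K : HRGraph C) where
  vEquiv : H.V ≃ K.V
  eEquiv : H.E ≃ K.E
  att_eq : ∀ e, (H.att e).map vEquiv = K.att (eEquiv e)
  lab_eq : ∀ e, H.lab e = K.lab (eEquiv e)
  ext_eq : H.ext.map vEquiv = K.ext

def Iso.refl (H : HRGraph C) : Iso H H :=
  ⟨Equiv.refl _, Equiv.refl _, by simp, by simp, by simp⟩

def Iso.symm {H K : HRGraph C} (i : Iso H K) : Iso K H where
  vEquiv := i.vEquiv.symm
  eEquiv := i.eEquiv.symm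
  att_eq e := by
    have h := i.att_eq (i.eEquiv.symm e)
    simp only [Equiv.apply_symm_apply] at h
    rw [← h, List.map_map]
    simp
  lab_eq e := by
    have h := i.lab_eq (i.eEquiv.symm e)
    simp only [Equiv.apply_symm_apply] at h
    exact h.symm
  ext_eq := by
    rw [← i.ext_eq, List.map_map]
    simp

def Iso.trans {H K L : HRGraph C} (i : Iso H K) (j : Iso K L) : Iso H L where
  vEquiv := i.vEquiv.trans j.vEquiv
  eEquiv := i.eEquiv.trans j.eEquiv
  att_eq e := by
    simp only [Equiv.coe_trans, ← List.map_map, i.att_eq, j.att_eq]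
    rfl
  lab_eq e := (i.lab_eq e).trans (j.lab_eq (i.eEquiv e))
  ext_eq := by
    simp only [Equiv.coe_trans, ← List.map_map, i.ext_eq, j.ext_eq]

/-- HRGraphs up to isomorphism. -/
def isoSetoid (C : Type) : Setoid (HRGraph C) :=
  ⟨fun H K => Nonempty (Iso H K),
   ⟨fun H => ⟨Iso.refl H⟩, fun ⟨i⟩ => ⟨i.symm⟩, fun ⟨i⟩ ⟨j⟩ => ⟨i.trans j⟩⟩⟩

/-- The handle `A•` of a label `A` of type `n`: one hyperedge labelled `A`
attached to `n` pairwise distinct nodes, all of them external. -/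
def handle (A : C) (n : ℕ) : HRGraph C where
  V := Fin n
  E := PUnit
  finV := inferInstance
  finE := inferInstance
  att _ := List.finRange n
  lab _ := A
  ext := List.finRange n
  ext_nodup := List.nodup_finRange n

/-- `K` is (isomorphic to) the result of replacing `e` by `R` in `H`. -/
def IsRepl (H : HRGraph C) (e : H.E) (R K : HRGraph C) : Prop :=
  ∃ hlen : R.ext.length = (H.att e).length, Nonempty (Iso K (H.replace e R hlen))

/-- A direct derivation step using some production of `P`. -/
def Step (P : Set (C × HRGraph C)) (H K : HRGraph C) : Prop :=
  ∃ p ∈ P, ∃ e : H.E, H.lab e = p.1 ∧ IsRepl H e p.2 K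

/-- Derivations: the reflexive-transitive closure of `Step`. -/
def Derives (P : Set (C × HRGraph C)) : HRGraph C → HRGraph C → Prop :=
  Relation.ReflTransGen (Step P)

/-- All hyperedges of `H` carry terminal labels. -/
def TerminalGraph (Tm : Set C) (H : HRGraph C) : Prop := ∀ e : H.E, H.lab e ∈ Tm

/-- The language generated from the handle of `S` (of type `tyS`). -/
def Lang (P : Set (C × HRGraph C)) (Tm : Set C) (S : C) (tyS : ℕ) :
    Set (HRGraph C) :=
  {H | Derives P (handle S tyS) H ∧ TerminalGraph Tm H}

end HRGraph

open HRGraph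

attribute [reducible] HRGraph.replace

namespace HRG
open HRGraph Classical

variable {C : Type}

theorem idxmap {α β} [DecidableEq α] [DecidableEq β] (f : α → β)
    (hf : Function.Injective f) (l : List α) (a : α) :
    (l.map f).idxOf (f a) = l.idxOf a := by
  induction l with
  | nil => rfl
  | cons b t ih =>
    simp only [List.map_cons, List.idxOf_cons, ih]
    by_cases h : b = a
    · subst h; simp
    · have h1 : (f b == f a) = false := by
        simp only [beq_eq_false_iff_ne, ne_eq]
        exact fun h' => h (hf h')
      have h2 : (b == a) = false := by simpa using h
      rw [h1, h2]

theorem get_congr_map {α β} (f : α → β) (l : List α) (l' : List β)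
    (h : l.map f = l') {n : ℕ} (hn : n < l.length) (hn' : n < l'.length) :
    l'.get ⟨n, hn'⟩ = f (l.get ⟨n, hn⟩) := by
  subst h; simp

theorem get_of_eq_map {α β} {f : α → β} {l : List α} {l' : List β} (h : l' = l.map f)
    {n : ℕ} (hn' : n < l'.length) :
    l'.get ⟨n, hn'⟩ = f (l.get ⟨n, by rw [h, List.length_map] at hn'; exact hn'⟩) := by
  subst h; simp

theorem get_idx_congr {α} (l : List α) {m n : ℕ} (h : m = n) (hm : m < l.length)
    (hn : n < l.length) : l.get ⟨m, hm⟩ = l.get ⟨n, hn⟩ := by subst h; rfl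

section replLemmas

variable (H : HRGraph C) (e : H.E) (R : HRGraph C)
  (hlen : R.ext.length = (H.att e).length)

@[simp] theorem replace_ext : (H.replace e R hlen).ext = H.ext.map Sum.inl := rfl

@[simp] theorem replace_att_inl (f : {e' : H.E // e' ≠ e}) :
    (H.replace e R hlen).att (Sum.inl f) = (H.att f.1).map Sum.inl := rfl

@[simp] theorem replace_att_inr (f : R.E) :
    (H.replace e R hlen).att (Sum.inr f) = (R.att f).map (fun v =>
      if hv : v ∈ R.ext then
        Sum.inl ((H.att e).get ⟨R.ext.idxOf v, hlen ▸ List.idxOf_lt_length_iff.mpr hv⟩)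
      else Sum.inr ⟨v, hv⟩) := rfl

@[simp] theorem replace_lab_inl (f : {e' : H.E // e' ≠ e}) :
    (H.replace e R hlen).lab (Sum.inl f) = H.lab f.1 := rfl

@[simp] theorem replace_lab_inr (f : R.E) :
    (H.replace e R hlen).lab (Sum.inr f) = R.lab f := rfl

theorem replace_ext_length : (H.replace e R hlen).ext.length = H.ext.length := by simp

theorem replace_att_inr_length (f : R.E) :
    ((H.replace e R hlen).att (Sum.inr f)).length = (R.att f).length := by simp

theorem replace_att_inl_length (f : {e' : H.E // e' ≠ e}) :
    ((H.replace e R hlen).att (Sum.inl f)).length = (H.att f.1).length := by simp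

end replLemmas

/-- Transfer a replacement along an isomorphism of the host graph. -/
noncomputable def replaceCongrLeft {H H' : HRGraph C} (i : Iso H H') (e : H.E)
    (X : HRGraph C) (hlen : X.ext.length = (H.att e).length)
    (hlen' : X.ext.length = (H'.att (i.eEquiv e)).length) :
    Iso (H.replace e X hlen) (H'.replace (i.eEquiv e) X hlen') where
  vEquiv := Equiv.sumCongr i.vEquiv (Equiv.refl _)
  eEquiv := Equiv.sumCongr
    (i.eEquiv.subtypeEquiv (fun f => by
      constructor
      · exact fun h h' => h (i.eEquiv.injective h')
      · exact fun h h' => h (by rw [h'])))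
    (Equiv.refl _)
  att_eq x := by
    rcases x with f | g
    · erw [Equiv.sumCongr_apply, Sum.map_inl, Equiv.subtypeEquiv_apply]
      rw [replace_att_inl, replace_att_inl]
      rw [← i.att_eq f.1, List.map_map, List.map_map]
      apply List.map_congr_left
      intro a _
      rfl
    · erw [Equiv.sumCongr_apply, Sum.map_inr]
      rw [replace_att_inr, replace_att_inr, List.map_map]
      apply List.map_congr_left
      intro v hv
      simp only [Function.comp_apply]
      by_cases hvx : v ∈ X.ext
      · rw [dif_pos hvx, dif_pos hvx]
        exact congrArg Sum.inl (get_congr_map _ _ _ (i.att_eq e) _ _).symm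
      · rw [dif_neg hvx, dif_neg hvx]
        rfl
  lab_eq x := by
    rcases x with f | g
    · exact i.lab_eq f.1
    · rfl
  ext_eq := by
    rw [replace_ext, replace_ext, ← i.ext_eq, List.map_map, List.map_map]
    apply List.map_congr_left
    intro a _
    rfl

end HRG

namespace HRG
open HRGraph Classical

variable {C : Type}

section comp

variable (H : HRGraph C) (e : H.E) (R : HRGraph C) (e' : R.E) (X : HRGraph C)
  (h2 : X.ext.length = (R.att e').length)
  (h1 : (R.replace e' X h2).ext.length = (H.att e).length)
  (h3 : R.ext.length = (H.att e).length)
  (h4 : X.ext.length = ((H.replace e R h3).att (Sum.inr e')).length)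

noncomputable def compV :
    (H.replace e (R.replace e' X h2) h1).V ≃ ((H.replace e R h3).replace (Sum.inr e') X h4).V where
  toFun x := match x with
    | Sum.inl h => Sum.inl (Sum.inl h)
    | Sum.inr ⟨Sum.inl r, hr⟩ => Sum.inl (Sum.inr ⟨r, fun hm =>
        hr ((List.mem_map_of_injective Sum.inl_injective).mpr hm)⟩)
    | Sum.inr ⟨Sum.inr w, _⟩ => Sum.inr w
  invFun y := match y with
    | Sum.inl (Sum.inl h) => Sum.inl h
    | Sum.inl (Sum.inr ⟨r, hr⟩) => Sum.inr ⟨Sum.inl r, fun hm =>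
        hr ((List.mem_map_of_injective Sum.inl_injective).mp hm)⟩
    | Sum.inr w => Sum.inr ⟨Sum.inr w, by
        rw [replace_ext]
        simp⟩
  left_inv := by rintro (h | ⟨r | w, hr⟩) <;> rfl
  right_inv := by rintro ((h | ⟨r, hr⟩) | w) <;> rfl

noncomputable def compE :
    (H.replace e (R.replace e' X h2) h1).E ≃ ((H.replace e R h3).replace (Sum.inr e') X h4).E where
  toFun x := match x with
    | Sum.inl f => Sum.inl ⟨Sum.inl f, fun h => Sum.inl_ne_inr h⟩
    | Sum.inr (Sum.inl g) => Sum.inl ⟨Sum.inr g.1, fun h => g.2 (Sum.inr.inj h)⟩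
    | Sum.inr (Sum.inr x) => Sum.inr x
  invFun y := match y with
    | Sum.inl ⟨Sum.inl f, _⟩ => Sum.inl f
    | Sum.inl ⟨Sum.inr g, hg⟩ => Sum.inr (Sum.inl ⟨g, fun h => hg (by rw [h])⟩)
    | Sum.inr x => Sum.inr (Sum.inr x)
  left_inv := by rintro (f | (g | x)) <;> rfl
  right_inv := by rintro (⟨f | g, h⟩ | x) <;> rfl

@[simp] theorem compE_inl (f : {f : H.E // f ≠ e}) :
    compE H e R e' X h2 h1 h3 h4 (Sum.inl f) =
      Sum.inl ⟨Sum.inl f, fun h => Sum.inl_ne_inr h⟩ := rfl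

@[simp] theorem compE_inr_inl (g : {g : R.E // g ≠ e'}) :
    compE H e R e' X h2 h1 h3 h4 (Sum.inr (Sum.inl g)) =
      Sum.inl ⟨Sum.inr g.1, fun h => g.2 (Sum.inr.inj h)⟩ := rfl

@[simp] theorem compE_inr_inr (x : X.E) :
    compE H e R e' X h2 h1 h3 h4 (Sum.inr (Sum.inr x)) = Sum.inr x := rfl

/-- Composition law `H[e/R[e'/X]] ≅ (H[e/R])[e''/X]`. -/
noncomputable def replaceComp :
    Iso (H.replace e (R.replace e' X h2) h1) ((H.replace e R h3).replace (Sum.inr e') X h4) where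
  vEquiv := compV H e R e' X h2 h1 h3 h4
  eEquiv := compE H e R e' X h2 h1 h3 h4
  att_eq x := by
    rcases x with f | (g | x)
    · rw [compE_inl]
      simp only [replace_att_inl, List.map_map]
      apply List.map_congr_left
      intro a _
      rfl
    · rw [compE_inr_inl]
      simp only [replace_att_inr, replace_att_inl, List.map_map]
      apply List.map_congr_left
      intro r hr
      simp only [Function.comp_apply, replace_ext,
        List.mem_map_of_injective Sum.inl_injective, idxmap Sum.inl Sum.inl_injective]
      by_cases hrx : r ∈ R.ext
      · rw [dif_pos hrx, dif_pos hrx]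
        rfl
      · rw [dif_neg hrx, dif_neg hrx]
        rfl
    · rw [compE_inr_inr]
      simp only [replace_att_inr, List.map_map]
      apply List.map_congr_left
      intro w hw
      simp only [Function.comp_apply, replace_ext,
        List.mem_map_of_injective Sum.inl_injective, idxmap Sum.inl Sum.inl_injective]
      by_cases hwx : w ∈ X.ext
      · rw [dif_pos hwx, dif_pos hwx, get_of_eq_map rfl]
        simp only [List.mem_map_of_injective Sum.inl_injective,
          idxmap Sum.inl Sum.inl_injective]
        split_ifs with hh1 <;> rfl
      · rw [dif_neg hwx, dif_neg hwx]
        rw [dif_neg (show (Sum.inr ⟨w, hwx⟩ : (R.replace e' X h2).V) ∉ R.ext.map Sum.inl by simp)]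
        rfl
  lab_eq x := by rcases x with f | (g | x) <;> rfl
  ext_eq := by
    show List.map (⇑(compV H e R e' X h2 h1 h3 h4)) (H.ext.map Sum.inl)
      = (H.ext.map Sum.inl).map Sum.inl
    rw [List.map_map, List.map_map]
    apply List.map_congr_left
    intro a _
    rfl

end comp
end HRG

namespace HRG
open HRGraph Classical

variable {C : Type}

section comm

variable (H : HRGraph C) (f g : H.E) (hfg : f ≠ g) (hgf : g ≠ f)
  (Y X : HRGraph C)
  (hY : Y.ext.length = (H.att f).length)
  (hX : X.ext.length = (H.att g).length)
  (hX' : X.ext.length = ((H.replace f Y hY).att (Sum.inl ⟨g, hgf⟩)).length)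
  (hY' : Y.ext.length = ((H.replace g X hX).att (Sum.inl ⟨f, hfg⟩)).length)

noncomputable def commV :
    ((H.replace f Y hY).replace (Sum.inl ⟨g, hgf⟩) X hX').V ≃
    ((H.replace g X hX).replace (Sum.inl ⟨f, hfg⟩) Y hY').V where
  toFun v := match v with
    | Sum.inl (Sum.inl h) => Sum.inl (Sum.inl h)
    | Sum.inl (Sum.inr y) => Sum.inr y
    | Sum.inr x => Sum.inl (Sum.inr x)
  invFun v := match v with
    | Sum.inl (Sum.inl h) => Sum.inl (Sum.inl h)
    | Sum.inl (Sum.inr x) => Sum.inr x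
    | Sum.inr y => Sum.inl (Sum.inr y)
  left_inv := by rintro ((h | y) | x) <;> rfl
  right_inv := by rintro ((h | x) | y) <;> rfl

noncomputable def commE :
    ((H.replace f Y hY).replace (Sum.inl ⟨g, hgf⟩) X hX').E ≃
    ((H.replace g X hX).replace (Sum.inl ⟨f, hfg⟩) Y hY').E where
  toFun d := match d with
    | Sum.inl ⟨Sum.inl h, hg⟩ => Sum.inl ⟨Sum.inl ⟨h.1,
        fun hEq => hg (congrArg Sum.inl (Subtype.ext hEq))⟩,
        fun hEq => h.2 (congrArg Subtype.val (Sum.inl.inj hEq))⟩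
    | Sum.inl ⟨Sum.inr y, _⟩ => Sum.inr y
    | Sum.inr x => Sum.inl ⟨Sum.inr x, fun hEq => Sum.inr_ne_inl hEq⟩
  invFun d := match d with
    | Sum.inl ⟨Sum.inl h, hf'⟩ => Sum.inl ⟨Sum.inl ⟨h.1,
        fun hEq => hf' (congrArg Sum.inl (Subtype.ext hEq))⟩,
        fun hEq => h.2 (congrArg Subtype.val (Sum.inl.inj hEq))⟩
    | Sum.inl ⟨Sum.inr x, _⟩ => Sum.inr x
    | Sum.inr y => Sum.inl ⟨Sum.inr y, fun hEq => Sum.inr_ne_inl hEq⟩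
  left_inv := by rintro (⟨h | y, hg⟩ | x) <;> rfl
  right_inv := by rintro (⟨h | x, hf'⟩ | y) <;> rfl

@[simp] theorem commE_inl_inl (h : {d : H.E // d ≠ f}) (hg : Sum.inl h ≠ Sum.inl ⟨g, hgf⟩) :
    commE H f g hfg hgf Y X hY hX hX' hY' (Sum.inl ⟨Sum.inl h, hg⟩) =
      Sum.inl ⟨Sum.inl ⟨h.1, fun hEq => hg (congrArg Sum.inl (Subtype.ext hEq))⟩,
        fun hEq => h.2 (congrArg Subtype.val (Sum.inl.inj hEq))⟩ := rfl

@[simp] theorem commE_inl_inr (y : Y.E)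
    (hg : (Sum.inr y : {d : H.E // d ≠ f} ⊕ Y.E) ≠ Sum.inl ⟨g, hgf⟩) :
    commE H f g hfg hgf Y X hY hX hX' hY' (Sum.inl ⟨Sum.inr y, hg⟩) = Sum.inr y := rfl

@[simp] theorem commE_inr (x : X.E) :
    commE H f g hfg hgf Y X hY hX hX' hY' (Sum.inr x) =
      Sum.inl ⟨Sum.inr x, fun hEq => Sum.inr_ne_inl hEq⟩ := rfl

/-- Commutation law: replacements at distinct hyperedges commute. -/
noncomputable def replaceComm :
    Iso ((H.replace f Y hY).replace (Sum.inl ⟨g, hgf⟩) X hX')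
        ((H.replace g X hX).replace (Sum.inl ⟨f, hfg⟩) Y hY') where
  vEquiv := commV H f g hfg hgf Y X hY hX hX' hY'
  eEquiv := commE H f g hfg hgf Y X hY hX hX' hY'
  att_eq d := by
    rcases d with ⟨h | y, hg⟩ | x
    · rw [commE_inl_inl]
      simp only [replace_att_inl, List.map_map]
      apply List.map_congr_left
      intro a _
      rfl
    · rw [commE_inl_inr]
      simp only [replace_att_inl, replace_att_inr, List.map_map]
      apply List.map_congr_left
      intro v hv
      simp only [Function.comp_apply]
      by_cases hvy : v ∈ Y.ext
      · rw [dif_pos hvy, dif_pos hvy, get_of_eq_map rfl]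
        rfl
      · rw [dif_neg hvy, dif_neg hvy]
        rfl
    · rw [commE_inr]
      simp only [replace_att_inl, replace_att_inr, List.map_map]
      apply List.map_congr_left
      intro w hw
      simp only [Function.comp_apply]
      by_cases hwx : w ∈ X.ext
      · rw [dif_pos hwx, dif_pos hwx, get_of_eq_map rfl]
        rfl
      · rw [dif_neg hwx, dif_neg hwx]
        rfl
  lab_eq d := by rcases d with ⟨h | y, hg⟩ | x <;> rfl
  ext_eq := by
    show List.map _ ((H.ext.map Sum.inl).map Sum.inl) = (H.ext.map Sum.inl).map Sum.inl
    simp only [List.map_map]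
    apply List.map_congr_left
    intro a _
    rfl

end comm
end HRG

namespace HRG
open HRGraph Classical

variable {C : Type}

/-- Length-indexed derivations. -/
inductive Der (P : Set (C × HRGraph C)) : ℕ → HRGraph C → HRGraph C → Prop
  | refl (H : HRGraph C) : Der P 0 H H
  | head {H H' K : HRGraph C} {n : ℕ} :
      Step P H H' → Der P n H' K → Der P (n + 1) H K

theorem Der.derives {P : Set (C × HRGraph C)} {n : ℕ} {H K : HRGraph C}
    (h : Der P n H K) : Derives P H K := by
  induction h with
  | refl => exact Relation.ReflTransGen.refl
  | head s _ ih => exact Relation.ReflTransGen.head s ih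

theorem Der.tail {P : Set (C × HRGraph C)} {n : ℕ} {H H' K : HRGraph C}
    (h : Der P n H H') (s : Step P H' K) : Der P (n + 1) H K := by
  induction h with
  | refl => exact Der.head s (Der.refl _)
  | head s' _ ih => exact Der.head s' (ih s)

theorem derives_der {P : Set (C × HRGraph C)} {H K : HRGraph C}
    (h : Derives P H K) : ∃ n, Der P n H K := by
  induction h with
  | refl => exact ⟨0, Der.refl _⟩
  | tail _ s ih => obtain ⟨n, d⟩ := ih; exact ⟨n + 1, d.tail s⟩

theorem att_length_eq {H K : HRGraph C} (i : Iso H K) (e : H.E) :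
    (K.att (i.eEquiv e)).length = (H.att e).length := by
  rw [← i.att_eq e, List.length_map]

/-- `Step` is invariant under isomorphism of the source graph. -/
theorem step_iso_left {P : Set (C × HRGraph C)} {H H' K : HRGraph C}
    (i : Iso H' H) (s : Step P H K) : Step P H' K := by
  obtain ⟨p, hp, e, hlabe, hlen, ⟨j⟩⟩ := s
  refine ⟨p, hp, i.symm.eEquiv e, ?_, ?_, ?_⟩
  · rw [i.symm.symm.lab_eq (i.symm.eEquiv e)]
    show H.lab (i.eEquiv (i.eEquiv.symm e)) = p.1
    rw [Equiv.apply_symm_apply]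
    exact hlabe
  · rw [att_length_eq i.symm e]; exact hlen
  · exact ⟨j.trans (replaceCongrLeft i.symm e p.2 hlen _)⟩

end HRG

namespace HRG
open HRGraph Classical

variable {C : Type}

/-- A persistent non-terminal edge can be rewritten first. -/
theorem pull_forward {P : Set (C × HRGraph C)} {Tm : Set C} {B : C} (hBnt : B ∉ Tm)
    {n : ℕ} {H K : HRGraph C} (d : Der P n H K) (hK : TerminalGraph Tm K) :
    ∀ e'' : H.E, H.lab e'' = B →
    ∃ X, (B, X) ∈ P ∧ ∃ (hlen : X.ext.length = (H.att e'').length)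
      (Z : HRGraph C) (m : ℕ),
      m < n ∧ Nonempty (Iso Z (H.replace e'' X hlen)) ∧ Der P m Z K := by
  revert hK
  induction d with
  | refl H0 =>
    intro hK e'' hlabB
    exact absurd (hlabB ▸ hK e'') hBnt
  | @head H H' K n s d ih =>
    intro hK e'' hlabB
    obtain ⟨p, hp, f, hlabf, hlen, ⟨i⟩⟩ := s
    by_cases hfe : f = e''
    · subst hfe
      refine ⟨p.2, ?_, hlen, H', n, Nat.lt_succ_self n, ⟨i⟩, d⟩
      have hB : (B, p.2) = p := by
        have h1 : p.1 = B := hlabf.symm.trans hlabB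
        rw [← h1]
      rw [hB]; exact hp
    · have hne : e'' ≠ f := fun h => hfe h.symm
      set e₂ : H'.E := i.eEquiv.symm (Sum.inl ⟨e'', hne⟩) with he₂
      have h2 : i.eEquiv e₂ = Sum.inl ⟨e'', hne⟩ := by
        rw [he₂, Equiv.apply_symm_apply]
      have hlabe₂ : H'.lab e₂ = B := by
        rw [i.lab_eq e₂, h2]
        exact hlabB
      obtain ⟨X, hXP, hlen₂, Z', m', hm', ⟨j⟩, d'⟩ := ih hK e₂ hlabe₂
      have hattlen : (H'.att e₂).length = (H.att e'').length := by
        calc (H'.att e₂).length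
            = ((H'.att e₂).map ⇑i.vEquiv).length := (List.length_map _).symm
          _ = ((H.replace f p.2 hlen).att (i.eEquiv e₂)).length := by rw [i.att_eq e₂]
          _ = ((H.replace f p.2 hlen).att (Sum.inl ⟨e'', hne⟩)).length := by rw [h2]
          _ = (H.att e'').length := by rw [replace_att_inl, List.length_map]
      have hlen'' : X.ext.length = (H.att e'').length := hlen₂.trans hattlen
      have hx : X.ext.length = ((H.replace f p.2 hlen).att (Sum.inl ⟨e'', hne⟩)).length := by
        rw [replace_att_inl, List.length_map]; exact hlen''
      have hfx : p.2.ext.length = ((H.replace e'' X hlen'').att (Sum.inl ⟨f, hfe⟩)).length := by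
        rw [replace_att_inl, List.length_map]; exact hlen
      refine ⟨X, hXP, hlen'', H.replace e'' X hlen'', m' + 1, by omega, ⟨Iso.refl _⟩, ?_⟩
      have k1 : Iso ((H.replace f p.2 hlen).replace (Sum.inl ⟨e'', hne⟩) X hx)
          (H'.replace e₂ X hlen₂) :=
        replaceCongrLeft i.symm (Sum.inl ⟨e'', hne⟩) X hx hlen₂
      have k2 : Iso ((H.replace f p.2 hlen).replace (Sum.inl ⟨e'', hne⟩) X hx)
          ((H.replace e'' X hlen'').replace (Sum.inl ⟨f, hfe⟩) p.2 hfx) :=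
        replaceComm H f e'' hfe hne p.2 X hlen hlen'' hx hfx
      exact Der.head ⟨p, hp, Sum.inl ⟨f, hfe⟩, hlabf, hfx, ⟨j.trans (k1.symm.trans k2)⟩⟩ d'

end HRG

namespace HRG
open HRGraph Classical

variable {C : Type}

theorem sim_old_new (Tm : Set C) (P : Set (C × HRGraph C)) (A B : C)
    (R : HRGraph C) (e' : R.E) (hlab : R.lab e' = B) (hBnt : B ∉ Tm) (n : ℕ) :
    ∀ (H K : HRGraph C), Der P n H K → TerminalGraph Tm K →
      Derives ((P \ {(A, R)}) ∪
        {q | ∃ X : HRGraph C, (B, X) ∈ P ∧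
          ∃ hlen : X.ext.length = (R.att e').length,
            q = (A, R.replace e' X hlen)}) H K := by
  induction n using Nat.strong_induction_on with
  | _ n ih =>
    intro H K d hK
    cases d with
    | refl => exact Relation.ReflTransGen.refl
    | @head _ H' _ m s d' =>
      obtain ⟨pq, hpq, e, hlabe, hlen, ⟨i⟩⟩ := s
      by_cases hpAR : pq = (A, R)
      · subst hpAR
        have hlabB' : H'.lab (i.eEquiv.symm (Sum.inr e')) = B := by
          rw [i.lab_eq, Equiv.apply_symm_apply]
          exact hlab
        obtain ⟨X, hXP, hlen₂, Z, m', hm', ⟨j⟩, dZ⟩ :=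
          pull_forward hBnt d' hK _ hlabB'
        have hder := ih m' (by omega) Z K dZ hK
        have hlenRX : X.ext.length = (R.att e').length := by
          calc X.ext.length = (H'.att (i.eEquiv.symm (Sum.inr e'))).length := hlen₂
            _ = ((H'.att (i.eEquiv.symm (Sum.inr e'))).map ⇑i.vEquiv).length :=
                (List.length_map _).symm
            _ = ((H.replace e (A, R).2 hlen).att
                  (i.eEquiv (i.eEquiv.symm (Sum.inr e')))).length := by
                rw [i.att_eq]
            _ = ((H.replace e (A, R).2 hlen).att (Sum.inr e')).length := by
                rw [Equiv.apply_symm_apply]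
            _ = (R.att e').length := by rw [replace_att_inr_length]
        have hlen1 : (R.replace e' X hlenRX).ext.length = (H.att e).length := by
          rw [replace_ext, List.length_map]; exact hlen
        have hx : X.ext.length = ((H.replace e R hlen).att (Sum.inr e')).length := by
          rw [replace_att_inr_length]; exact hlenRX
        have k1 : Iso ((H.replace e R hlen).replace (Sum.inr e') X hx)
            (H'.replace (i.eEquiv.symm (Sum.inr e')) X hlen₂) :=
          replaceCongrLeft i.symm (Sum.inr e') X hx hlen₂
        have k2 : Iso (H.replace e (R.replace e' X hlenRX) hlen1)
            ((H.replace e R hlen).replace (Sum.inr e') X hx) :=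
          replaceComp H e R e' X hlenRX hlen1 hlen hx
        exact Relation.ReflTransGen.head
          ⟨(A, R.replace e' X hlenRX), Or.inr ⟨X, hXP, hlenRX, rfl⟩, e, hlabe, hlen1,
            ⟨j.trans (k1.symm.trans k2.symm)⟩⟩ hder
      · exact Relation.ReflTransGen.head
          ⟨pq, Or.inl ⟨hpq, hpAR⟩, e, hlabe, hlen, ⟨i⟩⟩
          (ih m (Nat.lt_succ_self m) H' K d' hK)

theorem sim_new_old (P : Set (C × HRGraph C)) (A B : C)
    (R : HRGraph C) (hp : (A, R) ∈ P) (e' : R.E) (hlab : R.lab e' = B)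
    {H K : HRGraph C}
    (s : Step ((P \ {(A, R)}) ∪
        {q | ∃ X : HRGraph C, (B, X) ∈ P ∧
          ∃ hlen : X.ext.length = (R.att e').length,
            q = (A, R.replace e' X hlen)}) H K) :
    Derives P H K := by
  obtain ⟨q, hq, e, hlabe, hlen1, ⟨i⟩⟩ := s
  rcases hq with ⟨hqP, _⟩ | ⟨X, hXP, hlenRX, rfl⟩
  · exact Relation.ReflTransGen.single ⟨q, hqP, e, hlabe, hlen1, ⟨i⟩⟩
  · have hlenR : R.ext.length = (H.att e).length := by
      have h := hlen1
      rw [replace_ext (hlen := hlenRX), List.length_map] at h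
      exact h
    have hx : X.ext.length = ((H.replace e R hlenR).att (Sum.inr e')).length := by
      rw [replace_att_inr_length]; exact hlenRX
    have s1 : Step P H (H.replace e R hlenR) :=
      ⟨(A, R), hp, e, hlabe, hlenR, ⟨Iso.refl _⟩⟩
    have s2 : Step P (H.replace e R hlenR) K :=
      ⟨(B, X), hXP, Sum.inr e', hlab, hx,
        ⟨i.trans (replaceComp H e R e' X hlenRX hlen1 hlenR hx)⟩⟩
    exact Relation.ReflTransGen.head s1 (Relation.ReflTransGen.single s2)

theorem derives_new_old (P : Set (C × HRGraph C)) (A B : C)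
    (R : HRGraph C) (hp : (A, R) ∈ P) (e' : R.E) (hlab : R.lab e' = B)
    {H K : HRGraph C}
    (d : Derives ((P \ {(A, R)}) ∪
        {q | ∃ X : HRGraph C, (B, X) ∈ P ∧
          ∃ hlen : X.ext.length = (R.att e').length,
            q = (A, R.replace e' X hlen)}) H K) :
    Derives P H K := by
  induction d with
  | refl => exact Relation.ReflTransGen.refl
  | tail h s ihd => exact ihd.trans (sim_new_old P A B R hp e' hlab s)

end HRG


/-- Chomsky normal form transformation step (chain
elimination): if `p = (A, R)` is a production whose right-hand side contains
exactly one hyperedge `e'`, which carries a non-terminal label `B` with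
`A ≠ B`, then replacing `p` by the set of productions
`{ (A, R[e'/X]) : (B, X) ∈ P }` yields a grammar generating the same
language. -/
theorem chain_elimination {C : Type} (Tm : Set C)
    (P : Set (C × HRGraph C)) (S : C) (tyS : ℕ)
    (A B : C) (R : HRGraph C) (hp : (A, R) ∈ P)
    (e' : R.E) (huniq : ∀ e : R.E, e = e')
    (hlab : R.lab e' = B) (hBnt : B ∉ Tm) (hAB : A ≠ B) :
    HRGraph.Lang
      ((P \ {(A, R)}) ∪
        {q | ∃ X : HRGraph C, (B, X) ∈ P ∧
          ∃ hlen : X.ext.length = (R.att e').length,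
            q = (A, R.replace e' X hlen)})
      Tm S tyS
      = HRGraph.Lang P Tm S tyS := by
  ext K
  constructor
  · rintro ⟨der, term⟩
    exact ⟨HRG.derives_new_old P A B R hp e' hlab der, term⟩
  · rintro ⟨der, term⟩
    obtain ⟨n, d⟩ := HRG.derives_der der
    exact ⟨HRG.sim_old_new Tm P A B R e' hlab hBnt n _ _ d term, term⟩
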